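/- Let T be a spanning tree of K_{s,t} and let A_T = {v_e : e ∈ E(T)} ⊆ V(K⁺_{s,t}) be the set of added vertices corresponding to edges of T. Then A_T is a good set in K⁺_{s,t} of size s + t − 1; i.e., A_T is independent and every U with A_T ⊊ U ⊆ V(K⁺_{s,t}) satisfies Δ(U) ≥ s + t. -/

import Mathlib

/-- A 3-uniform hypergraph on vertex type `V`: a finite set of edges, each of size 3. -/
structure Hypergraph3 (V : Type*) where
  edges : Finset (Finset V)
  card3 : ∀ e ∈ edges, e.card = 3

variable {V : Type*} [DecidableEq V]

/-- The edges of `F` contained in the vertex set `U`. -/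
def edgesIn (F : Hypergraph3 V) (U : Finset V) : Finset (Finset V) :=
  F.edges.filter (fun e => e ⊆ U)

/-- The deficiency `Δ(U) = |U| - e(F[U])`. -/
def defic (F : Hypergraph3 V) (U : Finset V) : ℤ :=
  (U.card : ℤ) - ((edgesIn F U).card : ℤ)

/-- `A` is independent in `F` if no edge of `F` is contained in `A`. -/
def Indep (F : Hypergraph3 V) (A : Finset V) : Prop :=
  ∀ e ∈ F.edges, ¬ e ⊆ A

/-- `A` is good: independent, and every strict superset `U` has `Δ(U) ≥ |A| + 1`. -/
def Good (F : Hypergraph3 V) (A : Finset V) : Prop :=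
  Indep F A ∧ ∀ U : Finset V, A ⊂ U → (A.card : ℤ) + 1 ≤ defic F U

/-- The vertex type of `K⁺_{s,t}`: left part, right part, and one vertex per edge. -/
abbrev KV (s t : ℕ) := Fin s ⊕ Fin t ⊕ Fin s × Fin t

/-- The 3-edge of `K⁺_{s,t}` corresponding to the pair `p`. -/
def KplusEdge (s t : ℕ) (p : Fin s × Fin t) : Finset (KV s t) :=
  {Sum.inl p.1, Sum.inr (Sum.inl p.2), Sum.inr (Sum.inr p)}

/-- `K⁺_{s,t}`: the 3-uniform hypergraph obtained from `K_{s,t}` by adding a distinct new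
vertex to each edge. -/
def Kplus (s t : ℕ) : Hypergraph3 (KV s t) where
  edges := Finset.univ.image (KplusEdge s t)
  card3 := by
    intro e he
    simp only [Finset.mem_image] at he
    obtain ⟨p, -, rfl⟩ := he
    rw [KplusEdge, Finset.card_insert_of_notMem (by simp),
      Finset.card_insert_of_notMem (by simp), Finset.card_singleton]

/-- The bipartite graph on `Fin s ⊕ Fin t` whose edges are the pairs in `T`. -/
def bipGraph (s t : ℕ) (T : Finset (Fin s × Fin t)) : SimpleGraph (Fin s ⊕ Fin t) :=
  SimpleGraph.fromRel (fun a b => ∃ p ∈ T, a = Sum.inl p.1 ∧ b = Sum.inr p.2)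

section TreeAux
open SimpleGraph Walk


variable {α : Type*} [DecidableEq α] {G : SimpleGraph α}

lemma not_mem_support_of_short {u v r : α} (p : G.Walk u r) (hne : v ≠ u)
    (hlen : p.length ≤ G.dist v r) : v ∉ p.support := by
  intro hv
  have hspec := p.take_spec hv
  have hlen2 : (p.takeUntil v hv).length + (p.dropUntil v hv).length = p.length := by
    rw [← Walk.length_append, hspec]
  have h1 : 1 ≤ (p.takeUntil v hv).length := by
    rcases Nat.eq_zero_or_pos (p.takeUntil v hv).length with h | h
    · exact absurd (Walk.eq_of_length_eq_zero h).symm hne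
    · exact h
  have h2 : G.dist v r ≤ (p.dropUntil v hv).length := SimpleGraph.dist_le _
  omega

lemma unique_parent (hG : G.IsTree) {v u₁ u₂ r : α} (h1 : G.Adj v u₁) (h2 : G.Adj v u₂)
    (hd1 : G.dist u₁ r < G.dist v r) (hd2 : G.dist u₂ r < G.dist v r) : u₁ = u₂ := by
  obtain ⟨p₁, hp₁, hl₁⟩ := hG.isConnected.exists_path_of_dist u₁ r
  obtain ⟨p₂, hp₂, hl₂⟩ := hG.isConnected.exists_path_of_dist u₂ r
  have hn1 : v ∉ p₁.support := not_mem_support_of_short p₁ h1.ne (by omega)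
  have hn2 : v ∉ p₂.support := not_mem_support_of_short p₂ h2.ne (by omega)
  have := hG.IsAcyclic.path_unique ⟨Walk.cons h1 p₁, hp₁.cons hn1⟩ ⟨Walk.cons h2 p₂, hp₂.cons hn2⟩
  have h := congrArg (fun q : G.Path v r => q.1.getVert 1) this
  simpa using h

lemma adj_dist_ne (hG : G.IsTree) {u v r : α} (h : G.Adj u v) : G.dist u r ≠ G.dist v r := by
  intro he
  obtain ⟨p, hp, hl⟩ := hG.isConnected.exists_path_of_dist u r
  have hn : v ∉ p.support := not_mem_support_of_short p h.ne' (by omega)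
  obtain ⟨p', hp', hl'⟩ := hG.isConnected.exists_path_of_dist v r
  have := hG.IsAcyclic.path_unique ⟨Walk.cons h.symm p, hp.cons hn⟩ ⟨p', hp'⟩
  have hlen := congrArg (fun q : G.Path v r => q.1.length) this
  simp only [Walk.length_cons] at hlen
  omega

lemma forest_card' (hG : G.IsTree) {ι : Type*} [DecidableEq ι] (E' : Finset ι) (f g : ι → α)
    (hadj : ∀ p ∈ E', G.Adj (f p) (g p))
    (hne : ∀ p q, f p ≠ g q)
    (hinj : ∀ p ∈ E', ∀ q ∈ E', f p = f q → g p = g q → p = q)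
    (W : Finset α) {r : α} (hr : r ∈ W)
    (hf : ∀ p ∈ E', f p ∈ W) (hg : ∀ p ∈ E', g p ∈ W) :
    E'.card + 1 ≤ W.card := by
  classical
  have key : E'.card ≤ (W.erase r).card := by
    apply Finset.card_le_card_of_injOn
      (fun p => if G.dist (f p) r < G.dist (g p) r then g p else f p)
    · intro p hp
      by_cases hc : G.dist (f p) r < G.dist (g p) r
      · simp only [hc, if_true]
        refine Finset.mem_erase.2 ⟨?_, hg p hp⟩
        rintro rfl
        simp [SimpleGraph.dist_self] at hc
      · have hd := adj_dist_ne hG (hadj p hp) (r := r)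
        simp only [hc, if_false]
        refine Finset.mem_erase.2 ⟨?_, hf p hp⟩
        rintro rfl
        rw [SimpleGraph.dist_self] at hc hd
        omega
    · intro p hp q hq hpq
      simp only [Finset.mem_coe] at hp hq
      have hdp := adj_dist_ne hG (hadj p hp) (r := r)
      have hdq := adj_dist_ne hG (hadj q hq) (r := r)
      by_cases hcp : G.dist (f p) r < G.dist (g p) r <;>
        by_cases hcq : G.dist (f q) r < G.dist (g q) r <;>
        simp only [hcp, hcq, if_true, if_false] at hpq
      · -- g p = g q
        have := unique_parent hG (v := g p) (r := r)
          ((hadj p hp).symm) (hpq ▸ (hadj q hq).symm) hcp (by rw [hpq]; exact hcq)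
        exact hinj p hp q hq this hpq
      · exact absurd hpq.symm (hne q p)
      · exact absurd hpq (hne p q)
      · -- f p = f q
        have := unique_parent hG (v := f p) (r := r)
          (hadj p hp) (hpq ▸ (hadj q hq)) (by omega)
          (by rw [hpq]; omega)
        exact hinj p hp q hq hpq this
  have := Finset.card_erase_of_mem hr
  have hW : 1 ≤ W.card := Finset.card_pos.2 ⟨r, hr⟩
  omega

end TreeAux

lemma bipGraph_adj_of_mem {s t : ℕ} {T : Finset (Fin s × Fin t)} {p : Fin s × Fin t}
    (hp : p ∈ T) : (bipGraph s t T).Adj (Sum.inl p.1) (Sum.inr p.2) := by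
  rw [bipGraph, SimpleGraph.fromRel_adj]
  exact ⟨by simp, Or.inl ⟨p, hp, rfl, rfl⟩⟩

lemma bip_card (s t : ℕ) (T : Finset (Fin s × Fin t)) (hT : (bipGraph s t T).IsTree) :
    T.card + 1 = s + t := by
  classical
  have hbij : T.card = (bipGraph s t T).edgeFinset.card := by
    apply Finset.card_bij (fun p _ => s(Sum.inl p.1, (Sum.inr p.2 : Fin s ⊕ Fin t)))
    · intro p hp
      rw [SimpleGraph.mem_edgeFinset, SimpleGraph.mem_edgeSet]
      exact bipGraph_adj_of_mem hp
    · intro p hp q hq h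
      rw [Sym2.eq_iff] at h
      rcases h with ⟨h1, h2⟩ | ⟨h1, h2⟩
      · exact Prod.ext (by simpa using h1) (by simpa using h2)
      · simp at h1
    · intro e he
      rw [SimpleGraph.mem_edgeFinset] at he
      induction e with
      | _ x y =>
        rw [SimpleGraph.mem_edgeSet, bipGraph, SimpleGraph.fromRel_adj] at he
        obtain ⟨-, ⟨p, hp, rfl, rfl⟩ | ⟨p, hp, rfl, rfl⟩⟩ := he
        · exact ⟨p, hp, rfl⟩
        · exact ⟨p, hp, Sym2.eq_swap⟩
  have h2 := hT.card_edgeFinset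
  rw [← hbij] at h2
  simpa using h2

lemma KplusEdge_inj (s t : ℕ) : Function.Injective (KplusEdge s t) := by
  intro p q h
  have hm : (Sum.inr (Sum.inr p) : KV s t) ∈ KplusEdge s t q := by
    rw [← h]; simp [KplusEdge]
  simpa [KplusEdge] using hm


/-- if `T` is a spanning tree of `K_{s,t}`, then the set `A_T` of added vertices
corresponding to the edges of `T` is a good set of size `s + t - 1` in `K⁺_{s,t}`; in
particular every `U ⊋ A_T` satisfies `Δ(U) ≥ s + t`. -/
theorem spanning_tree_good (s t : ℕ) (T : Finset (Fin s × Fin t))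
    (hT : (bipGraph s t T).IsTree) :
    Good (Kplus s t) (T.image (fun p => (Sum.inr (Sum.inr p) : KV s t))) ∧
    (T.image (fun p => (Sum.inr (Sum.inr p) : KV s t))).card = s + t - 1 ∧
    (∀ U : Finset (KV s t),
      T.image (fun p => (Sum.inr (Sum.inr p) : KV s t)) ⊂ U →
      (s : ℤ) + t ≤ defic (Kplus s t) U) := by
  classical
  set A : Finset (KV s t) := T.image (fun p => (Sum.inr (Sum.inr p) : KV s t)) with hA
  have hAcard : A.card = T.card :=
    Finset.card_image_of_injective _ (by intro a b h; simpa using h)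
  have hst : T.card + 1 = s + t := bip_card s t T hT
  -- main bound
  have main : ∀ U : Finset (KV s t), A ⊂ U → (s : ℤ) + t ≤ defic (Kplus s t) U := by
    intro U hU
    set C : Finset (Fin s × Fin t) :=
      Finset.univ.filter (fun p => KplusEdge s t p ⊆ U) with hC
    have hedges : (edgesIn (Kplus s t) U).card = C.card := by
      have : edgesIn (Kplus s t) U = C.image (KplusEdge s t) := by
        rw [edgesIn]
        show (Finset.univ.image (KplusEdge s t)).filter (fun e => e ⊆ U) = _
        rw [Finset.filter_image]
      rw [this, Finset.card_image_of_injective _ (KplusEdge_inj s t)]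
    -- vertex counts
    set SL : Finset (Fin s) := Finset.univ.filter (fun i => (Sum.inl i : KV s t) ∈ U) with hSL
    set SR : Finset (Fin t) :=
      Finset.univ.filter (fun j => (Sum.inr (Sum.inl j) : KV s t) ∈ U) with hSR
    set SP : Finset (Fin s × Fin t) :=
      Finset.univ.filter (fun p => (Sum.inr (Sum.inr p) : KV s t) ∈ U) with hSP
    have hUcard : U.card = SL.card + SR.card + SP.card := by
      have hU1 : U = (SL.image Sum.inl) ∪
          ((SR.image (fun j => Sum.inr (Sum.inl j))) ∪ (SP.image (fun p => Sum.inr (Sum.inr p)))) := by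
        ext x
        rcases x with i | j | p <;> simp [hSL, hSR, hSP]
      rw [hU1, Finset.card_union_of_disjoint, Finset.card_union_of_disjoint,
        Finset.card_image_of_injective _ (by intro a b h; simpa using h),
        Finset.card_image_of_injective _ (by intro a b h; simpa using h),
        Finset.card_image_of_injective _ (by intro a b h; simpa using h)]
      · ring
      · rw [Finset.disjoint_left]; rintro x hx hy
        simp only [Finset.mem_image] at hx hy
        obtain ⟨j, -, rfl⟩ := hx; obtain ⟨p, -, h⟩ := hy; simp at h
      · rw [Finset.disjoint_left]; rintro x hx hy
        simp only [Finset.mem_image, Finset.mem_union] at hx hy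
        obtain ⟨i, -, rfl⟩ := hx
        rcases hy with ⟨j, -, h⟩ | ⟨p, -, h⟩ <;> simp at h
    have hCsplit : (C ∩ T).card + (C \ T).card = C.card := Finset.card_inter_add_card_sdiff C T
    have hTSP : T ⊆ SP := by
      intro p hp
      simp only [hSP, Finset.mem_filter, Finset.mem_univ, true_and]
      exact hU.1 (Finset.mem_image_of_mem _ hp)
    have hCSP : C ⊆ SP := by
      intro p hp
      simp only [hC, Finset.mem_filter, Finset.mem_univ, true_and] at hp
      simp only [hSP, Finset.mem_filter, Finset.mem_univ, true_and]
      exact hp (by simp [KplusEdge])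
    have h2 : (C \ T).card + T.card ≤ SP.card := by
      rw [← Finset.card_union_of_disjoint (Finset.sdiff_disjoint)]
      exact Finset.card_le_card (Finset.union_subset ((Finset.sdiff_subset).trans hCSP) hTSP)
    rcases Finset.eq_empty_or_nonempty C with hCe | ⟨p₀, hp₀⟩
    · have hlt : A.card < U.card := Finset.card_lt_card hU
      rw [defic, hedges, hCe]
      simp only [Finset.card_empty, Nat.cast_zero, sub_zero]
      have : s + t ≤ U.card := by omega
      exact_mod_cast this
    · -- root
      have hp₀C := hp₀
      simp only [hC, Finset.mem_filter, Finset.mem_univ, true_and] at hp₀C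
      have hp₀L : p₀.1 ∈ SL := by
        simp only [hSL, Finset.mem_filter, Finset.mem_univ, true_and]
        exact hp₀C (by simp [KplusEdge])
      set W : Finset (Fin s ⊕ Fin t) := SL.disjSum SR with hW
      have hWcard : W.card = SL.card + SR.card := Finset.card_disjSum _ _
      have hr : (Sum.inl p₀.1 : Fin s ⊕ Fin t) ∈ W := Finset.inl_mem_disjSum.2 hp₀L
      have h1 : (C ∩ T).card + 1 ≤ W.card := by
        apply forest_card' hT (C ∩ T) (fun p => Sum.inl p.1) (fun p => Sum.inr p.2)
          (fun p hp => bipGraph_adj_of_mem (Finset.mem_inter.1 hp).2)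
          (fun p q => by simp)
          (fun p hp q hq h1 h2 => Prod.ext (by simpa using h1) (by simpa using h2))
          W hr
        · intro p hp
          have hpC := (Finset.mem_inter.1 hp).1
          simp only [hC, Finset.mem_filter, Finset.mem_univ, true_and] at hpC
          refine Finset.inl_mem_disjSum.2 ?_
          simp only [hSL, Finset.mem_filter, Finset.mem_univ, true_and]
          exact hpC (by simp [KplusEdge])
        · intro p hp
          have hpC := (Finset.mem_inter.1 hp).1
          simp only [hC, Finset.mem_filter, Finset.mem_univ, true_and] at hpC
          refine Finset.inr_mem_disjSum.2 ?_
          simp only [hSR, Finset.mem_filter, Finset.mem_univ, true_and]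
          exact hpC (by simp [KplusEdge])
      rw [hWcard] at h1
      rw [defic, hedges, hUcard]
      push_cast
      omega
  refine ⟨⟨?_, ?_⟩, ?_, main⟩
  · -- Indep
    intro e he hsub
    have : e ∈ (Finset.univ.image (KplusEdge s t)) := he
    simp only [Finset.mem_image] at this
    obtain ⟨p, -, rfl⟩ := this
    have : (Sum.inl p.1 : KV s t) ∈ A := hsub (by simp [KplusEdge])
    simp [hA] at this
  · intro U hU
    have := main U hU
    have hc : (A.card : ℤ) + 1 = (s : ℤ) + t := by
      rw [hAcard]; exact_mod_cast hst
    omega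
  · omega
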